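/- (Proposition 1, USFA generalisation bound) Let w' ∈ ℝ^d be a task, C ⊂ ℝ^d a finite set of policy descriptors, and for each z ∈ C let ψ^{π_z} be the successor features of π_z (an optimal policy for task z) and ψ̃(·,·,z) an approximation. Define the GPI policy π(s) ∈ argmax_a max_{z∈C} ψ̃(s,a,z)ᵀw'. Then ‖Q*_{w'} − Q^π_{w'}‖_∞ ≤ (2/(1−γ)) [ min_{z∈C} ‖φ‖_∞ ‖w' − z‖ + max_{z∈C} ‖w'‖ ‖ψ^{π_z} − ψ̃(·,·,z)‖_∞ ]. -/

import Mathlib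

open scoped RealInnerProductSpace

noncomputable section

variable {S A E : Type*}

/-- Expected value at step `n` of the (vector-valued) one-step function `f` along
trajectories that start with the state-action pair `(s, a)` and afterwards follow the
deterministic policy `π` in an MDP with transition kernel `p`. -/
def stepVal [Fintype S] [AddCommMonoid E] [Module ℝ E]
    (p : S → A → S → ℝ) (π : S → A) (f : S → A → S → E) : ℕ → S → A → E
  | 0, s, a => ∑ s' : S, p s a s' • f s a s'
  | n + 1, s, a => ∑ s' : S, p s a s' • stepVal p π f n s' (π s')

/-- Expected discounted sum of the one-step quantities `f` when following policy `π`
after starting with the pair `(s, a)`. -/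
def polVal [Fintype S] [NormedAddCommGroup E] [NormedSpace ℝ E]
    (p : S → A → S → ℝ) (γ : ℝ) (π : S → A) (f : S → A → S → E) (s : S) (a : A) : E :=
  ∑' n : ℕ, γ ^ n • stepVal p π f n s a

/-- Action-value function `Q^π` of policy `π` for the one-step reward `r`. -/
def Qpol [Fintype S] (p : S → A → S → ℝ) (γ : ℝ) (π : S → A)
    (r : S → A → S → ℝ) (s : S) (a : A) : ℝ :=
  polVal p γ π r s a

/-- Successor features of policy `π`: the expected discounted sum of feature vectors. -/
def SF [Fintype S] {d : ℕ} (p : S → A → S → ℝ) (γ : ℝ) (π : S → A)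
    (φ : S → A → S → EuclideanSpace ℝ (Fin d)) (s : S) (a : A) :
    EuclideanSpace ℝ (Fin d) :=
  polVal p γ π φ s a

/-- `p` is a probability transition kernel. -/
def IsKernel [Fintype S] (p : S → A → S → ℝ) : Prop :=
  (∀ s a s', 0 ≤ p s a s') ∧ ∀ s a, ∑ s' : S, p s a s' = 1

/-- Optimal action-value function, over deterministic stationary policies. -/
def Qstar [Fintype S] (p : S → A → S → ℝ) (γ : ℝ) (r : S → A → S → ℝ)
    (s : S) (a : A) : ℝ :=
  ⨆ π : S → A, Qpol p γ π r s a

/-- Reward linear in the features `φ` with task (weight) vector `w`. -/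
def rTask {d : ℕ} (φ : S → A → S → EuclideanSpace ℝ (Fin d))
    (w : EuclideanSpace ℝ (Fin d)) : S → A → S → ℝ :=
  fun s a s' => ⟪φ s a s', w⟫

end

section Helpers

variable {S A E : Type*} [Fintype S] [NormedAddCommGroup E] [NormedSpace ℝ E]

lemma le_ciSup_finite {ι : Type*} [Finite ι] (f : ι → ℝ) (i : ι) : f i ≤ ⨆ j, f j :=
  le_ciSup (Set.finite_range f).bddAbove i

lemma norm_stepVal_le (p : S → A → S → ℝ) (hp : IsKernel p) (π : S → A)
    (f : S → A → S → E) (B : ℝ) (hB : ∀ s a s', ‖f s a s'‖ ≤ B) :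
    ∀ n s a, ‖stepVal p π f n s a‖ ≤ B := by
  intro n
  induction n with
  | zero =>
    intro s a
    calc ‖∑ s' : S, p s a s' • f s a s'‖ ≤ ∑ s' : S, ‖p s a s' • f s a s'‖ :=
          norm_sum_le _ _
      _ ≤ ∑ s' : S, p s a s' * B := by
          refine Finset.sum_le_sum fun s' _ => ?_
          rw [norm_smul, Real.norm_eq_abs, abs_of_nonneg (hp.1 s a s')]
          exact mul_le_mul_of_nonneg_left (hB s a s') (hp.1 s a s')
      _ = B := by rw [← Finset.sum_mul, hp.2 s a, one_mul]
  | succ n ih =>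
    intro s a
    calc ‖∑ s' : S, p s a s' • stepVal p π f n s' (π s')‖
        ≤ ∑ s' : S, ‖p s a s' • stepVal p π f n s' (π s')‖ := norm_sum_le _ _
      _ ≤ ∑ s' : S, p s a s' * B := by
          refine Finset.sum_le_sum fun s' _ => ?_
          rw [norm_smul, Real.norm_eq_abs, abs_of_nonneg (hp.1 s a s')]
          exact mul_le_mul_of_nonneg_left (ih s' (π s')) (hp.1 s a s')
      _ = B := by rw [← Finset.sum_mul, hp.2 s a, one_mul]

lemma summable_stepVal [CompleteSpace E] (p : S → A → S → ℝ) (hp : IsKernel p)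
    {γ : ℝ} (hγ0 : 0 ≤ γ) (hγ1 : γ < 1) (π : S → A)
    (f : S → A → S → E) (B : ℝ) (hB : ∀ s a s', ‖f s a s'‖ ≤ B) (s : S) (a : A) :
    Summable (fun n : ℕ => γ ^ n • stepVal p π f n s a) := by
  refine Summable.of_norm_bounded
    ((summable_geometric_of_lt_one hγ0 hγ1).mul_left B) fun n => ?_
  rw [norm_smul, Real.norm_eq_abs, abs_of_nonneg (pow_nonneg hγ0 n), mul_comm]
  exact mul_le_mul_of_nonneg_right (norm_stepVal_le p hp π f B hB n s a)
    (pow_nonneg hγ0 n)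

lemma norm_polVal_le [CompleteSpace E] (p : S → A → S → ℝ) (hp : IsKernel p)
    {γ : ℝ} (hγ0 : 0 ≤ γ) (hγ1 : γ < 1) (π : S → A)
    (f : S → A → S → E) (B : ℝ) (hB : ∀ s a s', ‖f s a s'‖ ≤ B) (s : S) (a : A) :
    ‖polVal p γ π f s a‖ ≤ B / (1 - γ) := by
  have hsum : Summable (fun n : ℕ => ‖γ ^ n • stepVal p π f n s a‖) := by
    refine Summable.of_nonneg_of_le (fun n => norm_nonneg _) (fun n => ?_)
      ((summable_geometric_of_lt_one hγ0 hγ1).mul_left B)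
    rw [norm_smul, Real.norm_eq_abs, abs_of_nonneg (pow_nonneg hγ0 n), mul_comm]
    exact mul_le_mul_of_nonneg_right (norm_stepVal_le p hp π f B hB n s a)
      (pow_nonneg hγ0 n)
  calc ‖polVal p γ π f s a‖ ≤ ∑' n : ℕ, ‖γ ^ n • stepVal p π f n s a‖ :=
        norm_tsum_le_tsum_norm hsum
    _ ≤ ∑' n : ℕ, B * γ ^ n := by
        refine Summable.tsum_le_tsum (fun n => ?_) hsum
          ((summable_geometric_of_lt_one hγ0 hγ1).mul_left B)
        rw [norm_smul, Real.norm_eq_abs, abs_of_nonneg (pow_nonneg hγ0 n), mul_comm]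
        exact mul_le_mul_of_nonneg_right (norm_stepVal_le p hp π f B hB n s a)
          (pow_nonneg hγ0 n)
    _ = B / (1 - γ) := by
        rw [tsum_mul_left, tsum_geometric_of_lt_one hγ0 hγ1]; rw [div_eq_mul_inv]

lemma stepVal_sub (p : S → A → S → ℝ) (π : S → A) (f g : S → A → S → E) :
    ∀ n s a, stepVal p π (fun s a s' => f s a s' - g s a s') n s a
      = stepVal p π f n s a - stepVal p π g n s a := by
  intro n
  induction n with
  | zero => intro s a; simp [stepVal, smul_sub, Finset.sum_sub_distrib]
  | succ n ih => intro s a; simp [stepVal, ih, smul_sub, Finset.sum_sub_distrib]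

lemma polVal_sub [CompleteSpace E] (p : S → A → S → ℝ) (hp : IsKernel p)
    {γ : ℝ} (hγ0 : 0 ≤ γ) (hγ1 : γ < 1) (π : S → A)
    (f g : S → A → S → E) (B B' : ℝ) (hB : ∀ s a s', ‖f s a s'‖ ≤ B)
    (hB' : ∀ s a s', ‖g s a s'‖ ≤ B') (s : S) (a : A) :
    polVal p γ π (fun s a s' => f s a s' - g s a s') s a
      = polVal p γ π f s a - polVal p γ π g s a := by
  unfold polVal
  rw [← Summable.tsum_sub (summable_stepVal p hp hγ0 hγ1 π f B hB s a)
    (summable_stepVal p hp hγ0 hγ1 π g B' hB' s a)]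
  congr 1; funext n
  rw [stepVal_sub, smul_sub]

variable {F : Type*} [NormedAddCommGroup F] [NormedSpace ℝ F]

lemma stepVal_clm (p : S → A → S → ℝ) (π : S → A) (f : S → A → S → E)
    (L : E →L[ℝ] F) :
    ∀ n s a, stepVal p π (fun s a s' => L (f s a s')) n s a
      = L (stepVal p π f n s a) := by
  intro n
  induction n with
  | zero => intro s a; simp [stepVal]
  | succ n ih => intro s a; simp [stepVal, ih]

lemma polVal_clm [CompleteSpace E] [CompleteSpace F] (p : S → A → S → ℝ)
    (hp : IsKernel p) {γ : ℝ} (hγ0 : 0 ≤ γ) (hγ1 : γ < 1) (π : S → A)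
    (f : S → A → S → E) (B : ℝ) (hB : ∀ s a s', ‖f s a s'‖ ≤ B)
    (L : E →L[ℝ] F) (s : S) (a : A) :
    polVal p γ π (fun s a s' => L (f s a s')) s a = L (polVal p γ π f s a) := by
  unfold polVal
  rw [L.map_tsum (summable_stepVal p hp hγ0 hγ1 π f B hB s a)]
  congr 1; funext n
  rw [stepVal_clm, L.map_smul]

/-- Bellman equation for `Qpol`. -/
lemma Qpol_bellman (p : S → A → S → ℝ) (hp : IsKernel p)
    {γ : ℝ} (hγ0 : 0 ≤ γ) (hγ1 : γ < 1) (π : S → A)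
    (r : S → A → S → ℝ) (B : ℝ) (hB : ∀ s a s', |r s a s'| ≤ B) (s : S) (a : A) :
    Qpol p γ π r s a = (∑ s' : S, p s a s' * r s a s')
      + γ * ∑ s' : S, p s a s' * Qpol p γ π r s' (π s') := by
  have hBn : ∀ s a s', ‖r s a s'‖ ≤ B := hB
  have hsum : ∀ s a, Summable (fun n : ℕ => γ ^ n • stepVal p π r n s a) :=
    fun s a => summable_stepVal p hp hγ0 hγ1 π r B hBn s a
  unfold Qpol polVal
  rw [Summable.tsum_eq_zero_add (hsum s a)]
  congr 1
  · simp [stepVal]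
  · have h1 : ∀ n : ℕ, γ ^ (n + 1) • stepVal p π r (n + 1) s a
        = ∑ s' : S, γ ^ (n + 1) * (p s a s' * stepVal p π r n s' (π s')) := by
      intro n
      show γ ^ (n+1) • ∑ s' : S, p s a s' • stepVal p π r n s' (π s') = _
      rw [Finset.smul_sum]
      simp [smul_eq_mul, mul_assoc]
    calc (∑' n : ℕ, γ ^ (n + 1) • stepVal p π r (n + 1) s a)
        = ∑' n : ℕ, ∑ s' : S, γ ^ (n + 1) * (p s a s' * stepVal p π r n s' (π s')) := by
          congr 1; funext n; exact h1 n
      _ = ∑ s' : S, ∑' n : ℕ, γ ^ (n + 1) * (p s a s' * stepVal p π r n s' (π s')) := by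
          refine Summable.tsum_finsetSum fun s' _ => ?_
          exact ((hsum s' (π s')).mul_left (γ * p s a s')).congr
            (fun n => by simp only [smul_eq_mul]; ring)
      _ = γ * ∑ s' : S, p s a s' * Qpol p γ π r s' (π s') := by
          rw [Finset.mul_sum]
          refine Finset.sum_congr rfl fun s' _ => ?_
          unfold Qpol polVal
          rw [← tsum_mul_left, ← tsum_mul_left]
          congr 1; funext n
          simp [smul_eq_mul]; ring
end Helpers
section Helpers3

variable {S A : Type*} [Fintype S] [Fintype A] [Nonempty A]

lemma Qpol_le_Qstar (p : S → A → S → ℝ) (γ : ℝ) (r : S → A → S → ℝ)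
    (π : S → A) (s : S) (a : A) : Qpol p γ π r s a ≤ Qstar p γ r s a :=
  le_ciSup (Set.finite_range fun π' : S → A => Qpol p γ π' r s a).bddAbove π

lemma Qstar_le (p : S → A → S → ℝ) (γ : ℝ) (r : S → A → S → ℝ)
    (s : S) (a : A) (x : ℝ) (h : ∀ π' : S → A, Qpol p γ π' r s a ≤ x) :
    Qstar p γ r s a ≤ x :=
  ciSup_le h

lemma abs_Qpol_sub_Qpol_le (p : S → A → S → ℝ) (hp : IsKernel p)
    {γ : ℝ} (hγ0 : 0 ≤ γ) (hγ1 : γ < 1) (π : S → A)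
    (r r' : S → A → S → ℝ) (B1 B2 B : ℝ)
    (hB1 : ∀ s a s', |r s a s'| ≤ B1) (hB2 : ∀ s a s', |r' s a s'| ≤ B2)
    (hB : ∀ s a s', |r s a s' - r' s a s'| ≤ B) (s : S) (a : A) :
    |Qpol p γ π r s a - Qpol p γ π r' s a| ≤ B / (1 - γ) := by
  have h := polVal_sub (E := ℝ) p hp hγ0 hγ1 π r r' B1 B2 hB1 hB2 s a
  have h2 := norm_polVal_le (E := ℝ) p hp hγ0 hγ1 π
    (fun s a s' => r s a s' - r' s a s') B hB s a
  rw [h] at h2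
  exact h2

lemma abs_Qstar_sub_Qstar_le (p : S → A → S → ℝ) (hp : IsKernel p)
    {γ : ℝ} (hγ0 : 0 ≤ γ) (hγ1 : γ < 1)
    (r r' : S → A → S → ℝ) (B1 B2 B : ℝ)
    (hB1 : ∀ s a s', |r s a s'| ≤ B1) (hB2 : ∀ s a s', |r' s a s'| ≤ B2)
    (hB : ∀ s a s', |r s a s' - r' s a s'| ≤ B) (s : S) (a : A) :
    |Qstar p γ r s a - Qstar p γ r' s a| ≤ B / (1 - γ) := by
  rw [abs_le]
  constructor
  · rw [neg_le, neg_sub, sub_le_iff_le_add]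
    refine Qstar_le p γ r' s a _ fun π' => ?_
    have := abs_Qpol_sub_Qpol_le p hp hγ0 hγ1 π' r r' B1 B2 B hB1 hB2 hB s a
    have h3 := (abs_le.1 this).1
    have h4 := Qpol_le_Qstar p γ r π' s a
    linarith
  · rw [sub_le_iff_le_add]
    refine Qstar_le p γ r s a _ fun π' => ?_
    have := abs_Qpol_sub_Qpol_le p hp hγ0 hγ1 π' r r' B1 B2 B hB1 hB2 hB s a
    have h3 := (abs_le.1 this).2
    have h4 := Qpol_le_Qstar p γ r' π' s a
    linarith

end Helpers3
section Helpers4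

open scoped RealInnerProductSpace

variable {S A : Type*} [Fintype S]

lemma Qpol_rTask_eq_inner {d : ℕ} (p : S → A → S → ℝ) (hp : IsKernel p)
    {γ : ℝ} (hγ0 : 0 ≤ γ) (hγ1 : γ < 1) (π : S → A)
    (φ : S → A → S → EuclideanSpace ℝ (Fin d)) (w : EuclideanSpace ℝ (Fin d))
    (B : ℝ) (hB : ∀ s a s', ‖φ s a s'‖ ≤ B) (s : S) (a : A) :
    Qpol p γ π (rTask φ w) s a = ⟪SF p γ π φ s a, w⟫ := by
  have hr : rTask φ w = fun s a s' => (innerSL ℝ w) (φ s a s') := by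
    funext s a s'
    simp only [rTask]; rw [real_inner_comm]; simp
  unfold Qpol SF
  rw [hr, polVal_clm p hp hγ0 hγ1 π φ B hB (innerSL ℝ w) s a]
  rw [real_inner_comm]; simp

lemma abs_rTask_le {d : ℕ} (φ : S → A → S → EuclideanSpace ℝ (Fin d))
    (w : EuclideanSpace ℝ (Fin d)) (B : ℝ) (hB : ∀ s a s', ‖φ s a s'‖ ≤ B)
    (s : S) (a : A) (s' : S) : |rTask φ w s a s'| ≤ B * ‖w‖ :=
  le_trans (abs_real_inner_le_norm _ _)
    (mul_le_mul_of_nonneg_right (hB s a s') (norm_nonneg w))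

end Helpers4
/-- Proposition 1, USFA generalisation bound. -/
theorem statement4 {S A : Type*} [Fintype S] [Fintype A] [Nonempty S] [Nonempty A]
    {d : ℕ} (p : S → A → S → ℝ) (hp : IsKernel p)
    (γ : ℝ) (hγ0 : 0 ≤ γ) (hγ1 : γ < 1)
    (φ : S → A → S → EuclideanSpace ℝ (Fin d)) (w' : EuclideanSpace ℝ (Fin d))
    (C : Finset (EuclideanSpace ℝ (Fin d))) (hC : C.Nonempty)
    (πz : EuclideanSpace ℝ (Fin d) → S → A)
    (hopt : ∀ z ∈ C, ∀ s a, Qpol p γ (πz z) (rTask φ z) s a = Qstar p γ (rTask φ z) s a)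
    (ψt : EuclideanSpace ℝ (Fin d) → S → A → EuclideanSpace ℝ (Fin d))
    (π : S → A)
    (hGPI : ∀ s a, (C.sup' hC fun z => ⟪ψt z s a, w'⟫) ≤
      C.sup' hC fun z => ⟪ψt z s (π s), w'⟫) :
    ∀ s a, |Qstar p γ (rTask φ w') s a - Qpol p γ π (rTask φ w') s a| ≤
      2 / (1 - γ) *
        ((C.inf' hC fun z => (⨆ s, ⨆ a, ⨆ s', ‖φ s a s'‖) * ‖w' - z‖) +
          C.sup' hC fun z =>
            ‖w'‖ * (⨆ s, ⨆ a, ‖SF p γ (πz z) φ s a - ψt z s a‖)) := by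
  intro s a
  classical
  have hγpos : (0:ℝ) < 1 - γ := by linarith
  set r' := rTask φ w' with hr'
  set Φ := (⨆ s, ⨆ a, ⨆ s', ‖φ s a s'‖) with hΦdef
  have hΦ : ∀ s a s', ‖φ s a s'‖ ≤ Φ := by
    intro s1 a1 s1'
    calc ‖φ s1 a1 s1'‖ ≤ ⨆ s', ‖φ s1 a1 s'‖ :=
          le_ciSup_finite (fun s' => ‖φ s1 a1 s'‖) s1'
      _ ≤ ⨆ a, ⨆ s', ‖φ s1 a s'‖ := le_ciSup_finite (fun a => ⨆ s', ‖φ s1 a s'‖) a1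
      _ ≤ Φ := le_ciSup_finite (fun s => ⨆ a, ⨆ s', ‖φ s a s'‖) s1
  have hΦ0 : 0 ≤ Φ := le_trans (norm_nonneg _)
    (hΦ (Classical.arbitrary S) (Classical.arbitrary A) (Classical.arbitrary S))
  set ε := (C.sup' hC fun z =>
      ‖w'‖ * (⨆ s, ⨆ a, ‖SF p γ (πz z) φ s a - ψt z s a‖)) with hεdef
  -- the per-task SF approximation bound
  have hD : ∀ z ∈ C, ∀ s a, ‖SF p γ (πz z) φ s a - ψt z s a‖
      ≤ ⨆ s, ⨆ a, ‖SF p γ (πz z) φ s a - ψt z s a‖ := by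
    intro z _ s1 a1
    calc ‖SF p γ (πz z) φ s1 a1 - ψt z s1 a1‖
        ≤ ⨆ a, ‖SF p γ (πz z) φ s1 a - ψt z s1 a‖ :=
          le_ciSup_finite (fun a => ‖SF p γ (πz z) φ s1 a - ψt z s1 a‖) a1
      _ ≤ ⨆ s, ⨆ a, ‖SF p γ (πz z) φ s a - ψt z s a‖ :=
          le_ciSup_finite (fun s => ⨆ a, ‖SF p γ (πz z) φ s a - ψt z s a‖) s1
  obtain ⟨zw, hzwC⟩ := id hC
  have hε0 : 0 ≤ ε := by
    refine le_trans ?_ (Finset.le_sup' _ hzwC)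
    have := le_trans (norm_nonneg (SF p γ (πz zw) φ s a - ψt zw s a)) (hD zw hzwC s a)
    positivity
  -- approximation error between Q^{π_z}_{w'} and the approximate Q values
  have hQψ : ∀ z ∈ C, ∀ s a,
      |Qpol p γ (πz z) r' s a - ⟪ψt z s a, w'⟫| ≤ ε := by
    intro z hz s1 a1
    rw [hr', Qpol_rTask_eq_inner p hp hγ0 hγ1 (πz z) φ w' Φ hΦ s1 a1,
      ← inner_sub_left]
    refine le_trans (abs_real_inner_le_norm _ _) (le_trans ?_ (Finset.le_sup' _ hz))
    rw [mul_comm]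
    exact mul_le_mul_of_nonneg_left (hD z hz s1 a1) (norm_nonneg w')
  -- GPI step
  set Qmax := fun (s1 : S) (a1 : A) =>
    C.sup' hC fun z => Qpol p γ (πz z) r' s1 a1 with hQmaxdef
  set Qt := fun (s1 : S) (a1 : A) => C.sup' hC fun z => ⟪ψt z s1 a1, w'⟫ with hQtdef
  have hQtQmax : ∀ s1 a1, Qt s1 a1 ≤ Qmax s1 a1 + ε := by
    intro s1 a1
    refine Finset.sup'_le _ _ fun z hz => ?_
    have h1 := (abs_le.1 (hQψ z hz s1 a1)).1
    have h2 : Qpol p γ (πz z) r' s1 a1 ≤ Qmax s1 a1 :=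
      Finset.le_sup' (fun z => Qpol p γ (πz z) r' s1 a1) hz
    linarith
  have hQmaxQt : ∀ s1 a1, ∀ z ∈ C, Qpol p γ (πz z) r' s1 a1 ≤ Qt s1 a1 + ε := by
    intro s1 a1 z hz
    have h1 := (abs_le.1 (hQψ z hz s1 a1)).2
    have h2 : ⟪ψt z s1 a1, w'⟫ ≤ Qt s1 a1 :=
      Finset.le_sup' (fun z => (⟪ψt z s1 a1, w'⟫ : ℝ)) hz
    linarith
  have hBw' : ∀ s a s', |r' s a s'| ≤ Φ * ‖w'‖ := fun s a s' =>
    abs_rTask_le φ w' Φ hΦ s a s'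
  -- minimal gap m
  obtain ⟨sa0, _, hsa0⟩ := Finset.exists_min_image (Finset.univ : Finset (S × A))
    (fun sa => Qpol p γ π r' sa.1 sa.2 - Qmax sa.1 sa.2) Finset.univ_nonempty
  set m := Qpol p γ π r' sa0.1 sa0.2 - Qmax sa0.1 sa0.2 with hmdef
  have hm_le : ∀ s1 a1, m ≤ Qpol p γ π r' s1 a1 - Qmax s1 a1 := fun s1 a1 =>
    hsa0 (s1, a1) (Finset.mem_univ _)
  -- m ≥ γ * (m - 2ε)
  obtain ⟨z1, hz1C, hz1⟩ := Finset.exists_mem_eq_sup' hC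
    (fun z => Qpol p γ (πz z) r' sa0.1 sa0.2)
  have hbell1 := Qpol_bellman p hp hγ0 hγ1 π r' (Φ * ‖w'‖) hBw' sa0.1 sa0.2
  have hbell2 := Qpol_bellman p hp hγ0 hγ1 (πz z1) r' (Φ * ‖w'‖) hBw' sa0.1 sa0.2
  have hpoint : ∀ s' : S, Qpol p γ (πz z1) r' s' (πz z1 s') - 2 * ε + m
      ≤ Qpol p γ π r' s' (π s') := by
    intro s'
    have h1 : Qpol p γ (πz z1) r' s' (πz z1 s') ≤ Qt s' (πz z1 s') + ε :=
      hQmaxQt s' (πz z1 s') z1 hz1C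
    have h2 : Qt s' (πz z1 s') ≤ Qt s' (π s') := hGPI s' (πz z1 s')
    have h3 : Qt s' (π s') ≤ Qmax s' (π s') + ε := hQtQmax s' (π s')
    have h4 := hm_le s' (π s')
    linarith
  have hm_ge : γ * (m - 2 * ε) ≤ m := by
    have hsum_ge : ∑ s' : S, p sa0.1 sa0.2 s' * (m - 2 * ε)
        ≤ ∑ s' : S, p sa0.1 sa0.2 s' *
            (Qpol p γ π r' s' (π s') - Qpol p γ (πz z1) r' s' (πz z1 s')) := by
      refine Finset.sum_le_sum fun s' _ => ?_
      refine mul_le_mul_of_nonneg_left ?_ (hp.1 _ _ _)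
      have := hpoint s'
      linarith
    have hsum_eq : ∑ s' : S, p sa0.1 sa0.2 s' * (m - 2 * ε) = m - 2 * ε := by
      rw [← Finset.sum_mul, hp.2, one_mul]
    have hsplit : ∑ s' : S, p sa0.1 sa0.2 s' *
          (Qpol p γ π r' s' (π s') - Qpol p γ (πz z1) r' s' (πz z1 s'))
        = (∑ s' : S, p sa0.1 sa0.2 s' * Qpol p γ π r' s' (π s'))
          - ∑ s' : S, p sa0.1 sa0.2 s' * Qpol p γ (πz z1) r' s' (πz z1 s') := by
      simp only [mul_sub, Finset.sum_sub_distrib]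
    have hm_eq : m = γ * (∑ s' : S, p sa0.1 sa0.2 s' *
        (Qpol p γ π r' s' (π s') - Qpol p γ (πz z1) r' s' (πz z1 s'))) := by
      have hq : Qmax sa0.1 sa0.2 = Qpol p γ (πz z1) r' sa0.1 sa0.2 := hz1
      rw [hmdef, hq, hbell1, hbell2, hsplit]
      ring
    calc γ * (m - 2*ε) = γ * (∑ s' : S, p sa0.1 sa0.2 s' * (m - 2 * ε)) := by
          rw [hsum_eq]
      _ ≤ γ * (∑ s' : S, p sa0.1 sa0.2 s' *
            (Qpol p γ π r' s' (π s') - Qpol p γ (πz z1) r' s' (πz z1 s'))) :=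
          mul_le_mul_of_nonneg_left hsum_ge hγ0
      _ = m := hm_eq.symm
  have hneg_m : -m ≤ 2 * ε / (1 - γ) := by
    rw [le_div_iff₀ hγpos]
    nlinarith
  -- Step 1: reward-distance bound using the inf'-attaining z0
  obtain ⟨z0, hz0C, hz0⟩ := Finset.exists_mem_eq_inf' hC (fun z => Φ * ‖w' - z‖)
  set B := Φ * ‖w' - z0‖ with hBdef
  have hrdiff : ∀ s a s', |r' s a s' - rTask φ z0 s a s'| ≤ B := by
    intro s1 a1 s1'
    have : r' s1 a1 s1' - rTask φ z0 s1 a1 s1' = ⟪φ s1 a1 s1', w' - z0⟫ := by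
      rw [hr']; simp [rTask, inner_sub_right]
    rw [this]
    exact le_trans (abs_real_inner_le_norm _ _)
      (mul_le_mul_of_nonneg_right (hΦ s1 a1 s1') (norm_nonneg _))
  have hBz0 : ∀ s a s', |rTask φ z0 s a s'| ≤ Φ * ‖z0‖ := fun s a s' =>
    abs_rTask_le φ z0 Φ hΦ s a s'
  have hstar : |Qstar p γ r' s a - Qstar p γ (rTask φ z0) s a| ≤ B / (1 - γ) :=
    abs_Qstar_sub_Qstar_le p hp hγ0 hγ1 r' (rTask φ z0) (Φ * ‖w'‖) (Φ * ‖z0‖) B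
      hBw' hBz0 hrdiff s a
  have hpolz0 : |Qpol p γ (πz z0) (rTask φ z0) s a - Qpol p γ (πz z0) r' s a|
      ≤ B / (1 - γ) := by
    have := abs_Qpol_sub_Qpol_le p hp hγ0 hγ1 (πz z0) r' (rTask φ z0)
      (Φ * ‖w'‖) (Φ * ‖z0‖) B hBw' hBz0 hrdiff s a
    rwa [abs_sub_comm]
  have hoptz0 := hopt z0 hz0C s a
  have h1 : Qstar p γ r' s a - Qpol p γ (πz z0) r' s a ≤ 2 * B / (1 - γ) := by
    have e1 := (abs_le.1 hstar).2
    have e2 := (abs_le.1 hpolz0).2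
    have : 2 * B / (1 - γ) = B / (1 - γ) + B / (1 - γ) := by ring
    rw [this]
    linarith [hoptz0]
  -- GPI policy loss
  have h2 : Qpol p γ (πz z0) r' s a - Qpol p γ π r' s a ≤ 2 * ε / (1 - γ) := by
    have hq : Qpol p γ (πz z0) r' s a ≤ Qmax s a :=
      Finset.le_sup' (fun z => Qpol p γ (πz z) r' s a) hz0C
    have := hm_le s a
    linarith
  -- put it all together
  have habs : |Qstar p γ r' s a - Qpol p γ π r' s a|
      = Qstar p γ r' s a - Qpol p γ π r' s a :=
    abs_of_nonneg (by linarith [Qpol_le_Qstar p γ r' π s a])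
  have hfin : 2 / (1 - γ) * (C.inf' hC (fun z => Φ * ‖w' - z‖) + ε)
      = 2 * B / (1 - γ) + 2 * ε / (1 - γ) := by
    rw [hz0]
    field_simp
  rw [habs, hfin]
  linarith
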